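/- Let p be a prime. If there exists a tuple of positive integers x_1, ..., x_R, each a power of p, with ∑_{i=1}^R 1/x_i = 1, then p - 1 divides R - 1. -/

import Mathlib

theorem stmt_5 (p R : ℕ) (hp : p.Prime)
    (x : Fin R → ℕ) (hpow : ∀ i, ∃ a : ℕ, x i = p ^ a)
    (hsum : ∑ i, ((x i : ℚ))⁻¹ = 1) :
    (p - 1) ∣ (R - 1) := by
  choose a ha using hpow
  rcases Nat.eq_zero_or_pos R with hR | hR
  · subst hR; simp at hsum
  set A := Finset.univ.sup a with hAdef
  have hA : ∀ i, a i ≤ A := fun i => Finset.le_sup (Finset.mem_univ i)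
  have hpne : (p : ℚ) ≠ 0 := by exact_mod_cast hp.pos.ne'
  have key : ∑ i, p ^ (A - a i) = p ^ A := by
    have : ((∑ i, p ^ (A - a i) : ℕ) : ℚ) = ((p ^ A : ℕ) : ℚ) := by
      push_cast
      calc ∑ i, (p : ℚ) ^ (A - a i)
          = ∑ i, (p : ℚ) ^ A * ((x i : ℚ))⁻¹ := by
            refine Finset.sum_congr rfl fun i _ => ?_
            rw [ha i]
            push_cast
            rw [pow_sub₀ (p : ℚ) hpne (hA i)]
        _ = (p : ℚ) ^ A := by rw [← Finset.mul_sum, hsum, mul_one]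
    exact_mod_cast this
  have hpm : p ≡ 1 [MOD p - 1] :=
    ((Nat.modEq_iff_dvd' hp.one_le).mpr dvd_rfl).symm
  have hsum_mod : ∀ s : Finset (Fin R), ∑ i ∈ s, p ^ (A - a i) ≡ ∑ _i ∈ s, 1 [MOD p - 1] := by
    intro s
    induction s using Finset.induction with
    | empty => rfl
    | insert _ _ h ih =>
        rw [Finset.sum_insert h, Finset.sum_insert h]
        exact Nat.ModEq.add (by simpa using hpm.pow _) ih
  have hR1 : R ≡ 1 [MOD p - 1] := by
    calc R = ∑ _i : Fin R, 1 := by simp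
      _ ≡ ∑ i, p ^ (A - a i) [MOD p - 1] := (hsum_mod Finset.univ).symm
      _ = p ^ A := key
      _ ≡ 1 [MOD p - 1] := by simpa using hpm.pow A
  exact (Nat.modEq_iff_dvd' hR).mp hR1.symm
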